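/- The integral ∫₀^{1/2} t^{−1}·((1−t)^{−1/2} − 1) dt is finite, and lim_{s→0⁺} ∫_s^{1/2} (u·(u−s))^{−1/2}·((1−u)^{−1/2} − 1) du = ∫₀^{1/2} t^{−1}·((1−t)^{−1/2} − 1) dt. -/

import Mathlib

open MeasureTheory

lemma keyA (t : ℝ) (ht : 0 ≤ t) (ht' : t ≤ 1/2) :
    0 ≤ (1 - t) ^ (-(1/2 : ℝ)) - 1 ∧ (1 - t) ^ (-(1/2 : ℝ)) - 1 ≤ 2 * t := by
  have h1 : (0:ℝ) < 1 - t := by linarith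
  set a := Real.sqrt (1 - t) with ha
  have ha2 : a ^ 2 = 1 - t := Real.sq_sqrt h1.le
  have hapos : 0 < a := Real.sqrt_pos.mpr h1
  have harpow : (1 - t) ^ (-(1/2 : ℝ)) = a⁻¹ := by
    rw [Real.rpow_neg h1.le, ← Real.sqrt_eq_rpow]
  have hia : 0 < a⁻¹ := inv_pos.mpr hapos
  have hmul : a * a⁻¹ = 1 := mul_inv_cancel₀ hapos.ne'
  have hale : a ≤ 1 := by nlinarith
  constructor
  · rw [harpow]
    nlinarith [hmul, hapos.le, hale, hia.le]
  · rw [harpow]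
    have key : 1 ≤ (1 + 2*t) * a := by
      nlinarith [mul_nonneg ht (sub_nonneg.mpr ht'), ha2, hapos.le, mul_nonneg ht ht]
    have hx : 1/a ≤ 1 + 2*t := (div_le_iff₀ hapos).mpr key
    rw [one_div] at hx
    linarith

lemma part1 : IntegrableOn (fun t : ℝ => t⁻¹ * ((1 - t) ^ (-(1/2 : ℝ)) - 1))
    (Set.Ioo (0:ℝ) (1/2)) := by
  have hmeas : Measurable (fun t : ℝ => t⁻¹ * ((1 - t) ^ (-(1/2 : ℝ)) - 1)) := by
    fun_prop
  apply Integrable.mono' (g := fun _ => (2:ℝ))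
  · exact integrableOn_const measure_Ioo_lt_top.ne
  · exact hmeas.aestronglyMeasurable
  · filter_upwards [ae_restrict_mem measurableSet_Ioo] with t ht
    obtain ⟨h0, h2⟩ := keyA t ht.1.le ht.2.le
    rw [Real.norm_eq_abs, abs_of_nonneg (mul_nonneg (inv_nonneg.mpr ht.1.le) h0)]
    have : t⁻¹ * ((1 - t) ^ (-(1/2 : ℝ)) - 1) ≤ t⁻¹ * (2 * t) := by
      apply mul_le_mul_of_nonneg_left h2 (inv_nonneg.mpr ht.1.le)
    rw [mul_comm 2 t, ← mul_assoc, inv_mul_cancel₀ ht.1.ne', one_mul] at this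
    exact this

lemma subst_eq (s : ℝ) (hs : s ∈ Set.Ioo (0:ℝ) (1/2)) :
    (∫ u in Set.Ioo s (1/2 : ℝ),
        (u * (u - s)) ^ (-(1/2 : ℝ)) * ((1 - u) ^ (-(1/2 : ℝ)) - 1))
    = ∫ t in Set.Ioo (0:ℝ) (1/2),
        Set.indicator (Set.Ioo 0 (1/2 - s))
          (fun t => ((t + s) * t) ^ (-(1/2 : ℝ)) * ((1 - (t + s)) ^ (-(1/2 : ℝ)) - 1)) t := by
  obtain ⟨hs0, hs2⟩ := hs
  set f : ℝ → ℝ := fun u => (u * (u - s)) ^ (-(1/2 : ℝ)) * ((1 - u) ^ (-(1/2 : ℝ)) - 1) with hf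
  have h1 : s ≤ 1/2 := hs2.le
  have step1 : (∫ u in Set.Ioo s (1/2 : ℝ), f u) = ∫ u in s..(1/2 : ℝ), f u := by
    rw [intervalIntegral.integral_of_le h1, integral_Ioc_eq_integral_Ioo]
  have step2 : (∫ t in (0:ℝ)..(1/2 - s), f (t + s)) = ∫ u in s..(1/2 : ℝ), f u := by
    have := intervalIntegral.integral_comp_add_right (a := 0) (b := 1/2 - s) f s
    simpa using this
  have step3 : (∫ t in (0:ℝ)..(1/2 - s), f (t + s))
      = ∫ t in Set.Ioo (0:ℝ) (1/2 - s), f (t + s) := by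
    rw [intervalIntegral.integral_of_le (by linarith), integral_Ioc_eq_integral_Ioo]
  have step4 : (∫ t in Set.Ioo (0:ℝ) (1/2), Set.indicator (Set.Ioo 0 (1/2 - s))
          (fun t => ((t + s) * t) ^ (-(1/2 : ℝ)) * ((1 - (t + s)) ^ (-(1/2 : ℝ)) - 1)) t)
      = ∫ t in Set.Ioo (0:ℝ) (1/2 - s), f (t + s) := by
    rw [setIntegral_indicator measurableSet_Ioo]
    have hss : Set.Ioo (0:ℝ) (1/2) ∩ Set.Ioo (0:ℝ) (1/2 - s) = Set.Ioo (0:ℝ) (1/2 - s) := by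
      apply Set.inter_eq_right.mpr
      exact Set.Ioo_subset_Ioo le_rfl (by linarith)
    rw [hss]
    apply setIntegral_congr_fun measurableSet_Ioo
    intro t _
    simp [hf, add_sub_cancel_right]
  rw [step1, ← step2, step3, step4]

lemma part2 : Filter.Tendsto
    (fun s : ℝ => ∫ t in Set.Ioo (0:ℝ) (1/2),
      Set.indicator (Set.Ioo 0 (1/2 - s))
        (fun t => ((t + s) * t) ^ (-(1/2 : ℝ)) * ((1 - (t + s)) ^ (-(1/2 : ℝ)) - 1)) t)
    (nhdsWithin 0 (Set.Ioi 0))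
    (nhds (∫ t in Set.Ioo (0:ℝ) (1/2), t⁻¹ * ((1 - t) ^ (-(1/2 : ℝ)) - 1))) := by
  apply tendsto_integral_filter_of_dominated_convergence
    (bound := fun t : ℝ => 2 * t ^ (-(1/2 : ℝ)))
  · -- measurability
    filter_upwards with s
    apply AEStronglyMeasurable.indicator _ measurableSet_Ioo
    apply Measurable.aestronglyMeasurable
    fun_prop
  · -- bound
    filter_upwards [Ioo_mem_nhdsGT_of_mem (Set.left_mem_Ico.mpr (by norm_num : (0:ℝ) < 1/2))]
      with s hs
    filter_upwards [ae_restrict_mem measurableSet_Ioo] with t ht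
    have ht0 : 0 < t := ht.1
    have hrn : (0:ℝ) ≤ t ^ (-(1/2 : ℝ)) := Real.rpow_nonneg ht0.le _
    by_cases h : t ∈ Set.Ioo (0:ℝ) (1/2 - s)
    · rw [Set.indicator_of_mem h]
      have hA0 : 0 < t + s := by linarith [hs.1]
      have hA2 : t + s ≤ 1/2 := by linarith [h.2]
      obtain ⟨hg0, hg2⟩ := keyA (t + s) hA0.le hA2
      have hprod : (0:ℝ) ≤ ((t + s) * t) ^ (-(1/2 : ℝ)) :=
        Real.rpow_nonneg (by positivity) _
      rw [Real.norm_eq_abs, abs_of_nonneg (mul_nonneg hprod hg0)]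
      rw [Real.mul_rpow hA0.le ht0.le]
      calc (t + s) ^ (-(1/2 : ℝ)) * t ^ (-(1/2 : ℝ)) * ((1 - (t + s)) ^ (-(1/2 : ℝ)) - 1)
          ≤ (t + s) ^ (-(1/2 : ℝ)) * t ^ (-(1/2 : ℝ)) * (2 * (t + s)) := by
            apply mul_le_mul_of_nonneg_left hg2
            exact mul_nonneg (Real.rpow_nonneg hA0.le _) hrn
        _ = 2 * ((t + s) ^ (-(1/2 : ℝ)) * (t + s) ^ (1 : ℝ)) * t ^ (-(1/2 : ℝ)) := by
            rw [Real.rpow_one]; ring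
        _ = 2 * (t + s) ^ ((1:ℝ)/2) * t ^ (-(1/2 : ℝ)) := by
            rw [← Real.rpow_add hA0]; norm_num
        _ ≤ 2 * 1 * t ^ (-(1/2 : ℝ)) := by
            apply mul_le_mul_of_nonneg_right _ hrn
            have : (t + s) ^ ((1:ℝ)/2) ≤ 1 :=
              Real.rpow_le_one hA0.le (by linarith) (by norm_num)
            linarith
        _ = 2 * t ^ (-(1/2 : ℝ)) := by ring
    · rw [Set.indicator_of_notMem h]
      simpa using mul_nonneg (by norm_num : (0:ℝ) ≤ 2) hrn
  · -- bound integrable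
    have h1 : IntervalIntegrable (fun x : ℝ => x ^ (-(1/2 : ℝ))) volume 0 (1/2) :=
      intervalIntegral.intervalIntegrable_rpow' (by norm_num)
    have h2 : IntegrableOn (fun x : ℝ => x ^ (-(1/2 : ℝ))) (Set.Ioc (0:ℝ) (1/2)) :=
      (intervalIntegrable_iff_integrableOn_Ioc_of_le (by norm_num)).mp h1
    exact ((h2.mono_set Set.Ioo_subset_Ioc_self).const_mul 2)
  · -- pointwise limit
    filter_upwards [ae_restrict_mem measurableSet_Ioo] with t ht
    have ht0 : 0 < t := ht.1
    have ht2 : t < 1/2 := ht.2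
    apply Filter.Tendsto.congr'
      (f₁ := fun s => ((t + s) * t) ^ (-(1/2 : ℝ)) * ((1 - (t + s)) ^ (-(1/2 : ℝ)) - 1))
    · filter_upwards [Ioo_mem_nhdsGT_of_mem (Set.left_mem_Ico.mpr (by linarith : (0:ℝ) < 1/2 - t))]
        with s hs
      rw [Set.indicator_of_mem]
      exact ⟨ht0, by linarith [hs.2]⟩
    · have c1 : ContinuousAt (fun s : ℝ => ((t + s) * t) ^ (-(1/2 : ℝ))) 0 := by
        apply ContinuousAt.rpow_const (by fun_prop)
        left; simp; positivity
      have c2 : ContinuousAt (fun s : ℝ => (1 - (t + s)) ^ (-(1/2 : ℝ))) 0 := by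
        apply ContinuousAt.rpow_const (by fun_prop)
        left; simp; intro h; linarith
      have hval : ((t + 0) * t) ^ (-(1/2 : ℝ)) * ((1 - (t + 0)) ^ (-(1/2 : ℝ)) - 1)
          = t⁻¹ * ((1 - t) ^ (-(1/2 : ℝ)) - 1) := by
        have : ((t + 0) * t) ^ (-(1/2 : ℝ)) = t⁻¹ := by
          rw [add_zero, Real.mul_rpow ht0.le ht0.le, ← Real.rpow_add ht0]
          norm_num [Real.rpow_neg_one]
        rw [this, add_zero]
      rw [← hval]
      exact ((c1.mul (c2.sub (continuousAt_const (y := (1:ℝ))))).tendsto.mono_left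
        nhdsWithin_le_nhds)

/-- ∫₀^{1/2} t^{−1}((1−t)^{−1/2}−1) dt is finite and
lim_{s→0⁺} ∫_s^{1/2} (u(u−s))^{−1/2}((1−u)^{−1/2}−1) du equals it. -/
theorem stmt_13 :
    IntegrableOn (fun t : ℝ => t⁻¹ * ((1 - t) ^ (-(1/2 : ℝ)) - 1))
      (Set.Ioo (0:ℝ) (1/2)) ∧
    Filter.Tendsto
      (fun s : ℝ => ∫ u in Set.Ioo s (1/2 : ℝ),
        (u * (u - s)) ^ (-(1/2 : ℝ)) * ((1 - u) ^ (-(1/2 : ℝ)) - 1))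
      (nhdsWithin 0 (Set.Ioi 0))
      (nhds (∫ t in Set.Ioo (0:ℝ) (1/2), t⁻¹ * ((1 - t) ^ (-(1/2 : ℝ)) - 1))) := by
  refine ⟨part1, ?_⟩
  apply Filter.Tendsto.congr' _ part2
  filter_upwards [Ioo_mem_nhdsGT_of_mem (Set.left_mem_Ico.mpr (by norm_num : (0:ℝ) < 1/2))]
    with s hs
  exact (subst_eq s hs).symm
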